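/- Let J be a finite set of integers all ≥ 3, and let characters a_J = (a_j)_{j∈J} and b_J = (b_j)_{j∈J} of G_J = ⊕_{j∈J} ℤ/2^j satisfy ∑_{j∈J} ∑_{t∈T_j} ω_j^{a_j t} = ∑_{j∈J} ∑_{t∈T_j} ω_j^{b_j t}. Then for every j ∈ J, a_j and b_j have the same parity; consequently a_J(t) = b_J(t) for every involution t ∈ G_J. -/

import Mathlib

open Complex

/-- `ω_j = exp(2πi/2^j)`, a primitive `2^j`-th root of unity. -/
noncomputable def omega (j : ℕ) : ℂ := Complex.exp (2 * Real.pi * Complex.I / 2 ^ j)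

/-- The connection set `T_j = {±(2i+1) mod 2^j : 0 ≤ i < 2^(j-3)}` in `ℤ/2^j`. -/
def Tset (j : ℕ) : Finset (ZMod (2 ^ j)) :=
  (Finset.range (2 ^ (j - 3))).image (fun i => ((2 * i + 1 : ℕ) : ZMod (2 ^ j))) ∪
    (Finset.range (2 ^ (j - 3))).image (fun i => -((2 * i + 1 : ℕ) : ZMod (2 ^ j)))

/-- The character sum `∑_{t ∈ T_j} ω_j^(a·t)`. -/
noncomputable def charSum (j : ℕ) (a : ZMod (2 ^ j)) : ℂ :=
  ∑ t ∈ Tset j, omega j ^ ((a * t).val)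

open Finset

lemma two_pow_neZero (j : ℕ) : NeZero ((2:ℕ)^j) := ⟨Nat.pos_iff_ne_zero.mp (Nat.pow_pos (by norm_num))⟩

section basic
variable {j : ℕ} (hj : 3 ≤ j)
include hj

lemma aux_lt (i : ℕ) (hi : i < 2^(j-3)) : 2*i+1 < 2^(j-2) := by
  have h1 : 2*i + 2 ≤ 2 * 2^(j-3) := by omega
  have h2 : 2 * 2^(j-3) = 2^(j-2) := by
    rw [← pow_succ']
    congr 1
    omega
  omega

lemma pow_lt_pow_sub {k : ℕ} (hk : k ≤ j) : (2:ℕ)^(j-k) ≤ 2^j := Nat.pow_le_pow_right (by norm_num) (by omega)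

lemma val_pos_mem (i : ℕ) (hi : i < 2^(j-3)) : (((2*i+1 : ℕ) : ZMod (2^j))).val = 2*i+1 := by
  apply ZMod.val_cast_of_lt
  have := aux_lt hj i hi
  have : (2:ℕ)^(j-2) ≤ 2^j := pow_lt_pow_sub hj (by omega)
  omega

lemma val_neg_mem (i : ℕ) (hi : i < 2^(j-3)) : (-((2*i+1 : ℕ) : ZMod (2^j))).val = 2^j - (2*i+1) := by
  haveI := two_pow_neZero j
  rw [ZMod.neg_val, if_neg, val_pos_mem hj i hi]
  intro h
  have := congrArg ZMod.val h
  rw [val_pos_mem hj i hi, ZMod.val_zero] at this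
  omega

lemma card_Tset : (Tset j).card = 2^(j-2) := by
  rw [Tset, Finset.card_union_of_disjoint, Finset.card_image_of_injOn, Finset.card_image_of_injOn,
    Finset.card_range]
  · have : (2:ℕ)^(j-2) = 2^(j-3) + 2^(j-3) := by
      rw [← two_mul, ← pow_succ']; congr 1; omega
    omega
  · intro i hi i' hi' h
    simp only [Finset.mem_range, Finset.mem_coe] at hi hi'
    have := congrArg ZMod.val (neg_injective h)
    rw [val_pos_mem hj i hi, val_pos_mem hj i' hi'] at this
    omega
  · intro i hi i' hi' h
    simp only [Finset.mem_range, Finset.mem_coe] at hi hi'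
    have := congrArg ZMod.val h
    rw [val_pos_mem hj i hi, val_pos_mem hj i' hi'] at this
    omega
  · rw [Finset.disjoint_left]
    rintro x hx hx'
    simp only [Finset.mem_image, Finset.mem_range] at hx hx'
    obtain ⟨i, hi, rfl⟩ := hx
    obtain ⟨i', hi', h⟩ := hx'
    have := congrArg ZMod.val h
    rw [val_pos_mem hj i hi, val_neg_mem hj i' hi'] at this
    have h1 := aux_lt hj i hi
    have h2 := aux_lt hj i' hi'
    have h3 : (2:ℕ)^(j-2) + 2^(j-2) ≤ 2^j := by
      have : (2:ℕ)^(j-2)+2^(j-2) = 2^(j-1) := by rw [← two_mul, ← pow_succ']; congr 1; omega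
      rw [this]; exact pow_lt_pow_sub hj (by omega)
    omega

end basic

def odds (m : ℕ) : Finset (ZMod (2^m)) := univ.filter (fun s => s.val % 2 = 1)

lemma card_odds (m : ℕ) (hm : 1 ≤ m) : (odds m).card = 2^(m-1) := by
  haveI := two_pow_neZero m
  rw [← Finset.card_range (2^(m-1))]
  refine Finset.card_bij' (fun s _ => s.val / 2) (fun i _ => ((2*i+1 : ℕ) : ZMod (2^m))) ?hi ?hj ?li ?ri
  case hi =>
    intro s hs
    simp only [odds, Finset.mem_filter] at hs
    have hlt : s.val < 2^m := ZMod.val_lt s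
    have hm2 : (2:ℕ)^m = 2 * 2^(m-1) := by
      rw [← pow_succ']; congr 1; omega
    simp only [Finset.mem_range]
    omega
  case hj =>
    intro i hi
    simp only [Finset.mem_range] at hi
    have hlt : 2*i+1 < 2^m := by
      have hm2 : (2:ℕ)^m = 2 * 2^(m-1) := by rw [← pow_succ']; congr 1; omega
      omega
    simp only [odds, Finset.mem_filter, Finset.mem_univ, true_and]
    rw [ZMod.val_cast_of_lt hlt]
    omega
  case li =>
    intro s hs
    simp only [odds, Finset.mem_filter] at hs
    have h2 : 2 * (s.val / 2) + 1 = s.val := by omega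
    show ((2 * (s.val / 2) + 1 : ℕ) : ZMod (2^m)) = s
    rw [h2, ZMod.natCast_zmod_val]
  case ri =>
    intro i hi
    simp only [Finset.mem_range] at hi
    have hlt : 2*i+1 < 2^m := by
      have hm2 : (2:ℕ)^m = 2 * 2^(m-1) := by rw [← pow_succ']; congr 1; omega
      omega
    show ((2*i+1 : ℕ) : ZMod (2^m)).val / 2 = i
    rw [ZMod.val_cast_of_lt hlt]
    omega

noncomputable def proj (j : ℕ) : ZMod (2^j) →+* ZMod (2^(j-1)) :=
  ZMod.castHom (pow_dvd_pow 2 (Nat.sub_le j 1)) _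

lemma proj_val {j : ℕ} (x : ZMod (2^j)) : (proj j x).val = x.val % 2^(j-1) := by
  haveI := two_pow_neZero j
  rw [proj, ZMod.castHom_apply, ← ZMod.natCast_val, ZMod.val_natCast]

lemma mem_Tset {j : ℕ} {t : ZMod (2^j)} (ht : t ∈ Tset j) :
    ∃ i < 2^(j-3), t = ((2*i+1 : ℕ) : ZMod (2^j)) ∨ t = -((2*i+1 : ℕ) : ZMod (2^j)) := by
  simp only [Tset, Finset.mem_union, Finset.mem_image, Finset.mem_range] at ht
  rcases ht with ⟨i, hi, rfl⟩ | ⟨i, hi, rfl⟩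
  · exact ⟨i, hi, Or.inl rfl⟩
  · exact ⟨i, hi, Or.inr rfl⟩

lemma proj_val_mem {j : ℕ} (hj : 3 ≤ j) {t : ZMod (2^j)} (ht : t ∈ Tset j) :
    (∃ i < 2^(j-3), (proj j t).val = 2*i+1) ∨ (∃ i < 2^(j-3), (proj j t).val = 2^(j-1) - (2*i+1)) := by
  have hp : (2:ℕ)^(j-1) = 2 * 2^(j-2) := by rw [← pow_succ']; congr 1; omega
  have hq : (2:ℕ)^j = 2 * 2^(j-1) := by rw [← pow_succ']; congr 1; omega
  obtain ⟨i, hi, h | h⟩ := mem_Tset ht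
  · left; exact ⟨i, hi, by
      rw [h, proj_val, val_pos_mem hj i hi, Nat.mod_eq_of_lt (by have := aux_lt hj i hi; omega)]⟩
  · right; exact ⟨i, hi, by
      rw [h, proj_val, val_neg_mem hj i hi]
      have h1 := aux_lt hj i hi
      have : (2:ℕ)^j - (2*i+1) = 2^(j-1) + (2^(j-1) - (2*i+1)) := by omega
      rw [this, Nat.add_mod_left, Nat.mod_eq_of_lt (by omega)]⟩

lemma proj_odd {j : ℕ} (hj : 3 ≤ j) {t : ZMod (2^j)} (ht : t ∈ Tset j) :
    (proj j t).val % 2 = 1 := by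
  have hp : (2:ℕ)^(j-1) = 2 * 2^(j-2) := by rw [← pow_succ']; congr 1; omega
  rcases proj_val_mem hj ht with ⟨i, hi, h⟩ | ⟨i, hi, h⟩
  · omega
  · have := aux_lt hj i hi; omega

lemma proj_injOn {j : ℕ} (hj : 3 ≤ j) : Set.InjOn (proj j) (Tset j) := by
  haveI := two_pow_neZero j
  intro t1 h1 t2 h2 heq
  have hp : (2:ℕ)^(j-1) = 2 * 2^(j-2) := by rw [← pow_succ']; congr 1; omega
  have hveq := congrArg ZMod.val heq
  obtain ⟨i1, hi1, e1⟩ := mem_Tset h1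
  obtain ⟨i2, hi2, e2⟩ := mem_Tset h2
  have l1 := aux_lt hj i1 hi1
  have l2 := aux_lt hj i2 hi2
  have key : ∀ (i : ℕ), i < 2^(j-3) → (proj j (((2*i+1 : ℕ) : ZMod (2^j)))).val = 2*i+1 := by
    intro i hi
    rw [proj_val, val_pos_mem hj i hi, Nat.mod_eq_of_lt (by have := aux_lt hj i hi; omega)]
  have keyn : ∀ (i : ℕ), i < 2^(j-3) → (proj j (-((2*i+1 : ℕ) : ZMod (2^j)))).val = 2^(j-1) - (2*i+1) := by
    intro i hi
    rw [proj_val, val_neg_mem hj i hi]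
    have h1 := aux_lt hj i hi
    have hq : (2:ℕ)^j = 2 * 2^(j-1) := by rw [← pow_succ']; congr 1; omega
    have : (2:ℕ)^j - (2*i+1) = 2^(j-1) + (2^(j-1) - (2*i+1)) := by omega
    rw [this, Nat.add_mod_left, Nat.mod_eq_of_lt (by omega)]
  have vinj : ∀ (s1 s2 : ZMod (2^j)), s1.val = s2.val → s1 = s2 := by
    intro s1 s2 h
    rw [← ZMod.natCast_zmod_val s1, ← ZMod.natCast_zmod_val s2, h]
  rcases e1 with rfl | rfl <;> rcases e2 with rfl | rfl
  · rw [key i1 hi1, key i2 hi2] at hveq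
    have : i1 = i2 := by omega
    rw [this]
  · rw [key i1 hi1, keyn i2 hi2] at hveq
    omega
  · rw [keyn i1 hi1, key i2 hi2] at hveq
    omega
  · rw [keyn i1 hi1, keyn i2 hi2] at hveq
    have : i1 = i2 := by omega
    rw [this]

lemma image_proj {j : ℕ} (hj : 3 ≤ j) : (Tset j).image (proj j) = odds (j-1) := by
  apply Finset.eq_of_subset_of_card_le
  · intro x hx
    obtain ⟨t, ht, rfl⟩ := Finset.mem_image.mp hx
    simp only [odds, Finset.mem_filter, Finset.mem_univ, true_and]
    exact proj_odd hj ht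
  · rw [Finset.card_image_of_injOn (proj_injOn hj), card_Tset hj, card_odds (j-1) (by omega)]
    apply le_of_eq; congr 1

lemma count_transport {j : ℕ} (hj : 3 ≤ j) (P : ZMod (2^(j-1)) → Prop) [DecidablePred P] :
    ((Tset j).filter (fun t => P (proj j t))).card = ((odds (j-1)).filter P).card := by
  rw [← image_proj hj, Finset.filter_image]
  exact (Finset.card_image_of_injOn ((proj_injOn hj).mono (Finset.filter_subset _ _))).symm

lemma even_filter_card {α : Type*} [DecidableEq α] (S : Finset α) (g : α → α)
    (hmem : ∀ a ∈ S, g a ∈ S) (hinv : ∀ a ∈ S, g (g a) = a) (hne : ∀ a ∈ S, g a ≠ a) :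
    S.card % 2 = 0 := by
  have h : (S.card : ZMod 2) = 0 := by
    have hcs : (S.card : ZMod 2) = ∑ _a ∈ S, (1 : ZMod 2) := by simp
    rw [hcs]
    refine Finset.sum_involution (fun a _ => g a) (fun a ha => ?_) (fun a ha _ => hne a ha)
      (fun a ha => hmem a ha) (fun a ha => hinv a ha)
    decide
  have := (ZMod.natCast_eq_zero_iff S.card 2).mp h
  omega

lemma val_mul_mod_two {m : ℕ} (x y : ZMod (2^m)) (hm : 1 ≤ m) :
    (x * y).val % 2 = (x.val * y.val) % 2 := by
  rw [ZMod.val_mul, Nat.mod_mod_of_dvd]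
  exact dvd_pow_self 2 (by omega)

lemma count_solutions (m : ℕ) (hm : 2 ≤ m) (a c : ZMod (2^m)) :
    ((odds m).filter (fun s => a * s = c)).card % 2
      = if a.val % 2 = 1 ∧ c.val % 2 = 1 then 1 else 0 := by
  haveI := two_pow_neZero m
  have hm1 : (1:ℕ) ≤ m := by omega
  by_cases ha : a.val % 2 = 1
  · -- a is a unit
    have hcop : Nat.Coprime a.val (2^m) := by
      apply Nat.Coprime.pow_right
      exact Nat.coprime_two_right.mpr (Nat.odd_iff.mpr ha)
    have hunit : IsUnit a := by
      rw [← ZMod.natCast_zmod_val a]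
      exact (ZMod.isUnit_iff_coprime a.val (2^m)).mpr hcop
    obtain ⟨u, hu⟩ := hunit
    have hinvodd : ((↑u⁻¹ : ZMod (2^m))).val % 2 = 1 := by
      have := ZMod.val_coe_unit_coprime u⁻¹
      have h2 : Nat.Coprime ((↑u⁻¹ : ZMod (2^m))).val 2 := Nat.Coprime.coprime_dvd_right (dvd_pow_self 2 (by omega)) this
      have := Nat.odd_iff.mp (Nat.coprime_two_right.mp h2)
      omega
    have hfe : (odds m).filter (fun s => a * s = c) = (odds m).filter (fun s => s = (↑u⁻¹ : ZMod (2^m)) * c) := by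
      apply Finset.filter_congr
      intro s _
      constructor
      · intro h; rw [← h, ← hu]; rw [← mul_assoc]; simp
      · intro h; rw [h, ← hu, ← mul_assoc]; simp
    rw [hfe, Finset.filter_eq']
    by_cases hc : c.val % 2 = 1
    · rw [if_pos, if_pos ⟨ha, hc⟩]
      · simp
      · simp only [odds, Finset.mem_filter, Finset.mem_univ, true_and]
        rw [val_mul_mod_two _ _ hm1, Nat.mul_mod, hinvodd, hc]
    · rw [if_neg, if_neg (by tauto)]
      · simp
      · simp only [odds, Finset.mem_filter, Finset.mem_univ, true_and]
        rw [val_mul_mod_two _ _ hm1, Nat.mul_mod, hinvodd]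
        omega
  · -- a even: involution s ↦ s + 2^(m-1)
    rw [if_neg (by tauto)]
    set e : ZMod (2^m) := ((2^(m-1) : ℕ) : ZMod (2^m)) with he
    have heval : e.val = 2^(m-1) := ZMod.val_cast_of_lt (by
      have : (2:ℕ)^m = 2 * 2^(m-1) := by rw [← pow_succ']; congr 1; omega
      have : (0:ℕ) < 2^(m-1) := Nat.pow_pos (by norm_num)
      omega)
    have hee : e + e = 0 := by
      rw [he, ← Nat.cast_add, ← two_mul, ← pow_succ']
      rw [show m - 1 + 1 = m by omega]
      exact ZMod.natCast_self (2^m)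
    have hae : a * e = 0 := by
      obtain ⟨k, hk⟩ : 2 ∣ a.val := by omega
      have : a = ((a.val : ℕ) : ZMod (2^m)) := (ZMod.natCast_zmod_val a).symm
      rw [this, he, ← Nat.cast_mul, hk]
      have : 2 * k * 2^(m-1) = k * 2^m := by
        rw [mul_comm 2 k, mul_assoc, ← pow_succ']
        congr 2
        omega
      rw [this, Nat.cast_mul, ZMod.natCast_self, mul_zero]
    apply even_filter_card _ (fun s => s + e)
    · intro s hs
      simp only [odds, Finset.mem_filter, Finset.mem_univ, true_and] at hs ⊢
      have h2d : (2:ℕ) ∣ 2^(m-1) := dvd_pow_self 2 (by omega)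
      obtain ⟨hodd, hsol⟩ := hs
      refine ⟨?_, ?_⟩
      · rw [ZMod.val_add, Nat.mod_mod_of_dvd _ (dvd_pow_self 2 (by omega)), Nat.add_mod, heval]
        omega
      · rw [mul_add, hae, add_zero]
        exact hsol
    · intro s _
      rw [add_assoc, hee, add_zero]
    · intro s _ h
      have h0 : e = 0 := by
        have := congrArg (fun x => x - s) h
        simpa using this
      rw [h0] at heval
      simp at heval
      have : (0:ℕ) < 2^(m-1) := Nat.pow_pos (by norm_num)
      omega

lemma proj_parity {j : ℕ} (hj : 2 ≤ j) (x : ZMod (2^j)) : (proj j x).val % 2 = x.val % 2 := by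
  rw [proj_val, Nat.mod_mod_of_dvd _ (dvd_pow_self 2 (by omega))]

lemma level_count {j : ℕ} (hj : 3 ≤ j) (x C : ZMod (2^j)) :
    ((Tset j).filter (fun t => proj j (x*t) = proj j C)).card % 2
      = if x.val % 2 = 1 ∧ C.val % 2 = 1 then 1 else 0 := by
  have hfe : ((Tset j).filter (fun t => proj j (x*t) = proj j C))
      = ((Tset j).filter (fun t => (fun s => proj j x * s = proj j C) (proj j t))) := by
    apply Finset.filter_congr
    intro t _
    rw [map_mul]
  rw [hfe]
  rw [count_transport hj (fun s => proj j x * s = proj j C), count_solutions (j-1) (by omega),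
    proj_parity (by omega), proj_parity (by omega)]

lemma proj_eq_iff {j : ℕ} (hj : 3 ≤ j) (x y : ZMod (2^j)) :
    proj j x = proj j y ↔ x = y ∨ x = y + ((2^(j-1) : ℕ) : ZMod (2^j)) := by
  haveI := two_pow_neZero j
  have hq : (2:ℕ)^j = 2 * 2^(j-1) := by rw [← pow_succ']; congr 1; omega
  have hpos : (0:ℕ) < 2^(j-1) := Nat.pow_pos (by norm_num)
  have heval : (((2^(j-1) : ℕ) : ZMod (2^j))).val = 2^(j-1) := ZMod.val_cast_of_lt (by omega)
  constructor
  · intro h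
    have hz : (proj j (x - y)) = 0 := by rw [map_sub, h, sub_self]
    have hzv : (x - y).val % 2^(j-1) = 0 := by rw [← proj_val, hz, ZMod.val_zero]
    have hlt : (x-y).val < 2^j := ZMod.val_lt _
    have : (x-y).val = 0 ∨ (x-y).val = 2^(j-1) := by
      obtain ⟨k, hk⟩ := Nat.dvd_of_mod_eq_zero hzv
      have hk2 : k < 2 := by
        by_contra hk2
        push_neg at hk2
        have : 2^(j-1) * 2 ≤ 2^(j-1) * k := Nat.mul_le_mul_left _ hk2
        omega
      interval_cases k <;> omega
    rcases this with h0 | h1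
    · left
      have : x - y = 0 := by
        rw [← ZMod.natCast_zmod_val (x-y), h0]; simp
      linear_combination this
    · right
      have : x - y = ((2^(j-1) : ℕ) : ZMod (2^j)) := by
        rw [← ZMod.natCast_zmod_val (x-y), h1]
      linear_combination this
  · rintro (rfl | rfl)
    · rfl
    · rw [map_add]
      have : proj j (((2^(j-1) : ℕ) : ZMod (2^j))) = 0 := by
        rw [map_natCast, ZMod.natCast_self]
      rw [this, add_zero]

lemma level_parity {N j j0 : ℕ} (hj : 3 ≤ j) (hj0 : 3 ≤ j0) (hjN : j ≤ N) (hj0N : j0 ≤ N)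
    (x : ZMod (2^j)) :
    (((Tset j).filter (fun t => 2^(N-j) * ((x*t).val) = 2^(N-j0))).card
      + ((Tset j).filter (fun t => 2^(N-j) * ((x*t).val) = 2^(N-j0) + 2^(N-1))).card) % 2
      = if j = j0 ∧ x.val % 2 = 1 then 1 else 0 := by
  haveI := two_pow_neZero j
  rcases lt_or_ge j j0 with hlt | hge
  · -- j < j0 : both filters empty
    have e1 : (2:ℕ)^(N-j) = 2^(N-j0) * 2^(j0-j) := by rw [← pow_add]; congr 1; omega
    have h2 : (2:ℕ) ∣ 2^(j0-j) := dvd_pow_self 2 (by omega)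
    have h2' : (2:ℕ) ∣ 2^(j0-1) := dvd_pow_self 2 (by omega)
    have e2 : (2:ℕ)^(N-1) = 2^(N-j0) * 2^(j0-1) := by rw [← pow_add]; congr 1; omega
    have hposc : (0:ℕ) < 2^(N-j0) := Nat.pow_pos (by norm_num)
    have hf1 : ((Tset j).filter (fun t => 2^(N-j) * ((x*t).val) = 2^(N-j0))) = ∅ := by
      apply Finset.filter_eq_empty_iff.mpr
      intro t _ h
      rw [e1, mul_assoc] at h
      have := Nat.eq_of_mul_eq_mul_left hposc (h.trans (mul_one _).symm)
      have hd : (2:ℕ) ∣ 2^(j0-j) * (x*t).val := Dvd.dvd.mul_right h2 _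
      omega
    have hf2 : ((Tset j).filter (fun t => 2^(N-j) * ((x*t).val) = 2^(N-j0) + 2^(N-1))) = ∅ := by
      apply Finset.filter_eq_empty_iff.mpr
      intro t _ h
      rw [e1, mul_assoc, e2] at h
      have h' : 2^(N-j0) * (2^(j0-j) * (x*t).val) = 2^(N-j0) * (1 + 2^(j0-1)) := by
        rw [h]; ring
      have := Nat.eq_of_mul_eq_mul_left hposc h'
      have hd : (2:ℕ) ∣ 2^(j0-j) * (x*t).val := Dvd.dvd.mul_right h2 _
      omega
    rw [hf1, hf2, if_neg (by omega)]
    simp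
  · -- j ≥ j0
    have hposj : (0:ℕ) < 2^(N-j) := Nat.pow_pos (by norm_num)
    have e1 : (2:ℕ)^(N-j0) = 2^(N-j) * 2^(j-j0) := by rw [← pow_add]; congr 1; omega
    have e2 : (2:ℕ)^(N-1) = 2^(N-j) * 2^(j-1) := by rw [← pow_add]; congr 1; omega
    have hlt1 : (2:ℕ)^(j-j0) < 2^j := Nat.pow_lt_pow_right (by norm_num) (by omega)
    have hle3 : (2:ℕ)^(j-j0) ≤ 2^(j-3) := Nat.pow_le_pow_right (by norm_num) (by omega)
    have hlt13 : (2:ℕ)^(j-3) < 2^(j-1) := Nat.pow_lt_pow_right (by norm_num) (by omega)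
    have hq : (2:ℕ)^j = 2 * 2^(j-1) := by rw [← pow_succ']; congr 1; omega
    have hlt2 : (2:ℕ)^(j-j0) + 2^(j-1) < 2^j := by omega
    set C1 : ZMod (2^j) := ((2^(j-j0) : ℕ) : ZMod (2^j)) with hC1
    set C2 : ZMod (2^j) := ((2^(j-j0) + 2^(j-1) : ℕ) : ZMod (2^j)) with hC2
    have hC1v : C1.val = 2^(j-j0) := ZMod.val_cast_of_lt (by omega)
    have hC2v : C2.val = 2^(j-j0) + 2^(j-1) := ZMod.val_cast_of_lt hlt2
    have hcond1 : ∀ t : ZMod (2^j), (2^(N-j) * ((x*t).val) = 2^(N-j0)) ↔ x*t = C1 := by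
      intro t
      rw [e1]
      constructor
      · intro h
        have := Nat.eq_of_mul_eq_mul_left hposj h
        rw [← ZMod.natCast_zmod_val (x*t), this]
      · intro h
        rw [h, hC1v]
    have hcond2 : ∀ t : ZMod (2^j), (2^(N-j) * ((x*t).val) = 2^(N-j0) + 2^(N-1)) ↔ x*t = C2 := by
      intro t
      rw [e1, e2, ← Nat.mul_add]
      constructor
      · intro h
        have := Nat.eq_of_mul_eq_mul_left hposj h
        rw [← ZMod.natCast_zmod_val (x*t), this]
      · intro h
        rw [h, hC2v]
    have hC12 : C1 ≠ C2 := by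
      intro h
      have hv := congrArg ZMod.val h
      rw [hC1v, hC2v] at hv
      have hp : (0:ℕ) < 2^(j-1) := Nat.pow_pos (by norm_num)
      omega
    have hsplit : ((Tset j).filter (fun t => 2^(N-j) * ((x*t).val) = 2^(N-j0))).card
        + ((Tset j).filter (fun t => 2^(N-j) * ((x*t).val) = 2^(N-j0) + 2^(N-1))).card
        = ((Tset j).filter (fun t => proj j (x*t) = proj j C1)).card := by
      have hf1 : ((Tset j).filter (fun t => 2^(N-j) * ((x*t).val) = 2^(N-j0)))
          = (Tset j).filter (fun t => x*t = C1) := Finset.filter_congr (fun t _ => by rw [hcond1 t])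
      have hf2 : ((Tset j).filter (fun t => 2^(N-j) * ((x*t).val) = 2^(N-j0) + 2^(N-1)))
          = (Tset j).filter (fun t => x*t = C2) := Finset.filter_congr (fun t _ => by rw [hcond2 t])
      have hf3 : (Tset j).filter (fun t => proj j (x*t) = proj j C1)
          = (Tset j).filter (fun t => x*t = C1 ∨ x*t = C2) := by
        apply Finset.filter_congr
        intro t _
        rw [proj_eq_iff hj]
        have : C2 = C1 + ((2^(j-1) : ℕ) : ZMod (2^j)) := by
          rw [hC2, hC1, Nat.cast_add]
        rw [this]
      rw [hf1, hf2, hf3, Finset.filter_or, Finset.card_union_of_disjoint]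
      rw [Finset.disjoint_left]
      intro t ht1 ht2
      simp only [Finset.mem_filter] at ht1 ht2
      exact hC12 (ht1.2 ▸ ht2.2)
    rw [hsplit, level_count hj]
    have hxC : (C1.val % 2 = 1) ↔ j = j0 := by
      rw [hC1v]
      constructor
      · intro h
        by_contra hne
        have : 1 ≤ j - j0 := by omega
        have : (2:ℕ) ∣ 2^(j-j0) := dvd_pow_self 2 (by omega)
        omega
      · intro h
        rw [h]
        simp
    by_cases hj' : j = j0
    · rw [if_congr (iff_of_eq rfl) rfl rfl]
      have h1 : C1.val % 2 = 1 := hxC.mpr hj'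
      by_cases hx : x.val % 2 = 1
      · rw [if_pos ⟨hx, h1⟩, if_pos ⟨hj', hx⟩]
      · rw [if_neg (by tauto), if_neg (by tauto)]
    · have h1 : ¬(C1.val % 2 = 1) := fun h => hj' (hxC.mp h)
      rw [if_neg (by tauto), if_neg (by tauto)]

lemma omega_pow {j N : ℕ} (hjN : j ≤ N) (m : ℕ) : omega j ^ m = omega N ^ (2^(N-j) * m) := by
  rw [omega, omega, ← Complex.exp_nat_mul, ← Complex.exp_nat_mul]
  congr 1
  have h : (2:ℂ)^N = 2^j * 2^(N-j) := by rw [← pow_add]; congr 1; omega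
  have h2 : (2:ℂ)^j ≠ 0 := pow_ne_zero _ two_ne_zero
  have h3 : (2:ℂ)^(N-j) ≠ 0 := pow_ne_zero _ two_ne_zero
  rw [h]
  push_cast
  field_simp

lemma omega_prim (N : ℕ) : IsPrimitiveRoot (omega N) (2^N) := by
  have h := Complex.isPrimitiveRoot_exp (2^N) (two_pow_neZero N).out
  have e : omega N = Complex.exp (2 * Real.pi * Complex.I / ((2^N : ℕ) : ℂ)) := by
    rw [omega]
    norm_num
  rw [e]
  exact h

lemma cyclotomic_two_pow (n : ℕ) : Polynomial.cyclotomic (2^(n+1)) ℚ = Polynomial.X^(2^n) + 1 := by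
  rw [Polynomial.cyclotomic_prime_pow_eq_geom_sum Nat.prime_two]
  rw [Finset.sum_range_succ, Finset.sum_range_one]
  simp [add_comm]

lemma coeff_eq_of_root (N : ℕ) (hN : 1 ≤ N) (c : ℕ → ℤ)
    (hroot : ∑ m ∈ Finset.range (2^N), (c m : ℂ) * omega N ^ m = 0)
    (k : ℕ) (hk : k < 2^(N-1)) : c k = c (k + 2^(N-1)) := by
  set h : ℕ := 2^(N-1) with hh
  have h2N : (2:ℕ)^N = 2 * 2^(N-1) := by rw [← pow_succ']; congr 1; omega
  set p : Polynomial ℚ := ∑ m ∈ Finset.range (2^N), Polynomial.monomial m ((c m : ℚ)) with hp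
  have hcoeff : ∀ n : ℕ, p.coeff n = if n < 2^N then (c n : ℚ) else 0 := by
    intro n
    rw [hp, Polynomial.finset_sum_coeff]
    simp only [Polynomial.coeff_monomial]
    rw [Finset.sum_ite_eq' (Finset.range (2^N)) n (fun m => ((c m : ℚ)))]
    simp [Finset.mem_range]
  have haeval : Polynomial.aeval (omega N) p = 0 := by
    rw [hp, map_sum]
    rw [← hroot]
    apply Finset.sum_congr rfl
    intro m _
    rw [Polynomial.aeval_monomial, eq_ratCast (algebraMap ℚ ℂ)]
    push_cast
    ring
  have hmin : Polynomial.X^h + 1 = minpoly ℚ (omega N) := by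
    have e1 := Polynomial.cyclotomic_eq_minpoly_rat (omega_prim N) (Nat.pow_pos (by norm_num))
    rw [← e1]
    have : N = (N-1) + 1 := by omega
    rw [this] at *
    exact (cyclotomic_two_pow (N-1)).symm
  have hdvd : Polynomial.X^h + 1 ∣ p := by
    rw [hmin]
    exact minpoly.dvd ℚ (omega N) haeval
  obtain ⟨r, hr⟩ := hdvd
  have hkey : p.coeff k = p.coeff (k + h) := by
    by_cases hr0 : r = 0
    · rw [hr, hr0, mul_zero]
      simp
    · have hmonic : (Polynomial.X^h + 1 : Polynomial ℚ).Monic := by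
        rw [← Polynomial.C_1]
        exact Polynomial.monic_X_pow_add_C 1 (by positivity)
      have hq0 : (Polynomial.X^h + 1 : Polynomial ℚ) ≠ 0 := hmonic.ne_zero
      have hp0 : p ≠ 0 := by
        rw [hr]
        exact mul_ne_zero hq0 hr0
      have hdegq : (Polynomial.X^h + 1 : Polynomial ℚ).natDegree = h := by
        rw [← Polynomial.C_1, Polynomial.natDegree_X_pow_add_C]
      have hdegp : p.natDegree < 2^N := by
        rw [Polynomial.natDegree_lt_iff_degree_lt hp0]
        refine (Polynomial.degree_lt_iff_coeff_zero p (2^N)).mpr ?_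
        intro m hm
        have hm' : 2^N ≤ m := by exact_mod_cast hm
        rw [hcoeff m, if_neg (by omega)]
      have hdegr : r.natDegree < h := by
        have := Polynomial.natDegree_mul hq0 hr0
        rw [← hr, hdegq] at this
        omega
      have e1 : p.coeff k = r.coeff k := by
        rw [hr, add_mul, one_mul, Polynomial.coeff_add, Polynomial.coeff_X_pow_mul', if_neg (by omega), zero_add]
      have e2 : p.coeff (k + h) = r.coeff k := by
        rw [hr, add_mul, one_mul, Polynomial.coeff_add, Polynomial.coeff_X_pow_mul r h k,
          Polynomial.coeff_eq_zero_of_natDegree_lt (show r.natDegree < k + h by omega), add_zero]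
      rw [e1, e2]
  rw [hcoeff, hcoeff, if_pos (by omega), if_pos (by omega)] at hkey
  exact_mod_cast hkey

/-- If two characters `a_J`, `b_J` of `G_J = ⊕_{j∈J} ℤ/2^j` give the same value on the
connection set `S_J = ∪_j T_j`, then each pair `a_j`, `b_j` has the same parity;
consequently `a_J` and `b_J` agree on every involution of `G_J`. -/
theorem stmt_8 (J : Finset ℕ) (hJ : ∀ j ∈ J, 3 ≤ j)
    (a b : (j : ℕ) → ZMod (2 ^ j))
    (hsum : ∑ j ∈ J, charSum j (a j) = ∑ j ∈ J, charSum j (b j)) :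
    (∀ j ∈ J, (a j).val % 2 = (b j).val % 2) ∧
      ∀ g : (j : ℕ) → ZMod (2 ^ j), (∀ j ∈ J, g j + g j = 0) →
        ∏ j ∈ J, omega j ^ ((a j * g j).val) = ∏ j ∈ J, omega j ^ ((b j * g j).val) := by
  classical
  have parity : ∀ j ∈ J, (a j).val % 2 = (b j).val % 2 := by
    intro j0 hj0
    set N : ℕ := J.sup id with hNdef
    have hj0N : j0 ≤ N := Finset.le_sup (f := id) hj0
    have hj03 : 3 ≤ j0 := hJ j0 hj0
    have hN1 : 1 ≤ N := by omega
    have hjN : ∀ j ∈ J, j ≤ N := fun j hj => Finset.le_sup (f := id) hj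
    -- counting functions
    set μ : ((j : ℕ) → ZMod (2 ^ j)) → ℕ → ℕ → ℕ :=
      fun x j m => ((Tset j).filter (fun t => 2^(N-j) * ((x j * t).val) = m)).card with hμ
    have hside : ∀ (x : (j : ℕ) → ZMod (2 ^ j)), ∑ j ∈ J, charSum j (x j)
        = ∑ m ∈ Finset.range (2^N), ((∑ j ∈ J, μ x j m : ℕ) : ℂ) * omega N ^ m := by
      intro x
      have hswap : ∑ m ∈ Finset.range (2^N), ((∑ j ∈ J, μ x j m : ℕ) : ℂ) * omega N ^ m
          = ∑ j ∈ J, ∑ m ∈ Finset.range (2^N), ((μ x j m : ℕ) : ℂ) * omega N ^ m := by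
        rw [Finset.sum_comm]
        apply Finset.sum_congr rfl
        intro m _
        rw [← Finset.sum_mul]
        push_cast
        ring
      rw [hswap]
      apply Finset.sum_congr rfl
      intro j hj
      have hj3 : 3 ≤ j := hJ j hj
      have hjN' : j ≤ N := hjN j hj
      haveI := two_pow_neZero j
      have hmaps : ∀ t ∈ Tset j, 2^(N-j) * ((x j * t).val) ∈ Finset.range (2^N) := by
        intro t _
        simp only [Finset.mem_range]
        have hv : (x j * t).val < 2^j := ZMod.val_lt _
        calc 2^(N-j) * ((x j * t).val) < 2^(N-j) * 2^j :=
              mul_lt_mul_of_pos_left hv (Nat.pow_pos (by norm_num))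
          _ = 2^N := by rw [← pow_add]; congr 1; omega
      have h1 : charSum j (x j) = ∑ t ∈ Tset j, omega N ^ (2^(N-j) * ((x j * t).val)) :=
        Finset.sum_congr rfl (fun t _ => omega_pow hjN' _)
      rw [h1, ← Finset.sum_fiberwise_of_maps_to hmaps
        (fun t => omega N ^ (2^(N-j) * ((x j * t).val)))]
      apply Finset.sum_congr rfl
      intro m _
      have hinner : ∑ t ∈ (Tset j).filter (fun t => 2^(N-j) * ((x j * t).val) = m),
          omega N ^ (2^(N-j) * ((x j * t).val))
          = ∑ _t ∈ (Tset j).filter (fun t => 2^(N-j) * ((x j * t).val) = m), omega N ^ m := by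
        apply Finset.sum_congr rfl
        intro t ht
        rw [(Finset.mem_filter.mp ht).2]
      rw [hinner, Finset.sum_const, hμ]
      simp [mul_comm]
    -- the root relation
    set c : ℕ → ℤ := fun m => (∑ j ∈ J, μ a j m : ℤ) - (∑ j ∈ J, μ b j m : ℤ) with hc
    have hroot : ∑ m ∈ Finset.range (2^N), (c m : ℂ) * omega N ^ m = 0 := by
      have h0 : ∑ m ∈ Finset.range (2^N), ((∑ j ∈ J, μ a j m : ℕ) : ℂ) * omega N ^ m
          - ∑ m ∈ Finset.range (2^N), ((∑ j ∈ J, μ b j m : ℕ) : ℂ) * omega N ^ m = 0 := by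
        rw [← hside a, ← hside b, hsum, sub_self]
      rw [← Finset.sum_sub_distrib] at h0
      rw [← h0]
      apply Finset.sum_congr rfl
      intro m _
      rw [hc]
      push_cast
      ring
    have hk : 2^(N-j0) < 2^(N-1) := Nat.pow_lt_pow_right (by norm_num) (by omega)
    have key := coeff_eq_of_root N hN1 c hroot (2^(N-j0)) hk
    simp only [hc] at key
    simp only [← Nat.cast_sum] at key
    -- pass to ZMod 2
    have hnat : (∑ j ∈ J, μ a j (2^(N-j0))) + (∑ j ∈ J, μ b j (2^(N-j0) + 2^(N-1)))
        = (∑ j ∈ J, μ a j (2^(N-j0) + 2^(N-1))) + (∑ j ∈ J, μ b j (2^(N-j0))) := by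
      omega
    have hz2 := congrArg (fun n : ℕ => (n : ZMod 2)) hnat
    push_cast at hz2
    have swap : ∀ p q r s : ZMod 2, p + s = r + q → p + r = q + s := by decide
    have hz3 : ((∑ j ∈ J, μ a j (2^(N-j0)) : ℕ) : ZMod 2) + ((∑ j ∈ J, μ a j (2^(N-j0) + 2^(N-1)) : ℕ) : ZMod 2)
        = ((∑ j ∈ J, μ b j (2^(N-j0)) : ℕ) : ZMod 2) + ((∑ j ∈ J, μ b j (2^(N-j0) + 2^(N-1)) : ℕ) : ZMod 2) := by
      push_cast
      exact swap _ _ _ _ hz2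
    -- per-level evaluation
    have hlevel : ∀ (x : (j : ℕ) → ZMod (2 ^ j)),
        ((∑ j ∈ J, μ x j (2^(N-j0)) : ℕ) : ZMod 2) + ((∑ j ∈ J, μ x j (2^(N-j0) + 2^(N-1)) : ℕ) : ZMod 2)
        = if (x j0).val % 2 = 1 then 1 else 0 := by
      intro x
      have h1 : ((∑ j ∈ J, μ x j (2^(N-j0)) : ℕ) : ZMod 2) + ((∑ j ∈ J, μ x j (2^(N-j0) + 2^(N-1)) : ℕ) : ZMod 2)
          = ∑ j ∈ J, (((μ x j (2^(N-j0)) + μ x j (2^(N-j0) + 2^(N-1)) : ℕ)) : ZMod 2) := by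
        push_cast
        rw [← Finset.sum_add_distrib]
      rw [h1]
      have h2 : ∀ j ∈ J, (((μ x j (2^(N-j0)) + μ x j (2^(N-j0) + 2^(N-1)) : ℕ)) : ZMod 2)
          = if j = j0 then (if (x j).val % 2 = 1 then (1 : ZMod 2) else 0) else 0 := by
        intro j hj
        have hp := level_parity (hJ j hj) hj03 (hjN j hj) hj0N (x j)
        have : (((μ x j (2^(N-j0)) + μ x j (2^(N-j0) + 2^(N-1)) : ℕ)) : ZMod 2)
            = (((μ x j (2^(N-j0)) + μ x j (2^(N-j0) + 2^(N-1))) % 2 : ℕ) : ZMod 2) :=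
          (ZMod.natCast_mod _ 2).symm
        rw [this, hμ] at *
        rw [hp]
        by_cases hjj : j = j0
        · subst hjj
          by_cases hx : (x j).val % 2 = 1
          · rw [if_pos ⟨rfl, hx⟩, if_pos rfl, if_pos hx]
            norm_num
          · rw [if_neg (by tauto), if_pos rfl, if_neg hx]
            norm_num
        · rw [if_neg (by tauto), if_neg hjj]
          norm_num
      rw [Finset.sum_congr rfl h2, Finset.sum_ite_eq' J j0
        (fun j => if (x j).val % 2 = 1 then (1 : ZMod 2) else 0), if_pos hj0]
    rw [hlevel a, hlevel b] at hz3
    by_cases ha : (a j0).val % 2 = 1 <;> by_cases hb : (b j0).val % 2 = 1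
    · omega
    · rw [if_pos ha, if_neg hb] at hz3
      exact absurd hz3 one_ne_zero
    · rw [if_neg ha, if_pos hb] at hz3
      exact absurd hz3.symm one_ne_zero
    · omega
  refine ⟨parity, ?_⟩
  intro g hg
  apply Finset.prod_congr rfl
  intro j hj
  have hj3 : 3 ≤ j := hJ j hj
  haveI := two_pow_neZero j
  have hq : (2:ℕ)^j = 2 * 2^(j-1) := by rw [← pow_succ']; congr 1; omega
  have hgval : (g j).val = 0 ∨ (g j).val = 2^(j-1) := by
    have h2 := hg j hj
    have hv := congrArg ZMod.val h2
    rw [ZMod.val_add, ZMod.val_zero] at hv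
    have hlt : (g j).val < 2^j := ZMod.val_lt _
    obtain ⟨k, hk2⟩ := Nat.dvd_of_mod_eq_zero hv
    have hk2' : k < 2 := by
      by_contra hkk
      push_neg at hkk
      have : 2^j * 2 ≤ 2^j * k := Nat.mul_le_mul_left _ hkk
      omega
    interval_cases k <;> omega
  rcases hgval with h0 | h1
  · have : g j = 0 := by
      rw [← ZMod.natCast_zmod_val (g j), h0]; simp
    rw [this, mul_zero, mul_zero]
  · have hgj : g j = ((2^(j-1) : ℕ) : ZMod (2^j)) := by
      rw [← ZMod.natCast_zmod_val (g j), h1]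
    have hpos : (0:ℕ) < 2^(j-1) := Nat.pow_pos (by norm_num)
    have hval : ∀ x : ZMod (2^j), (x * g j).val = 2^(j-1) * (x.val % 2) := by
      intro x
      rw [hgj, ZMod.val_mul, ZMod.val_cast_of_lt (by omega)]
      set X := x.val with hX
      have h3 : X = 2 * (X / 2) + X % 2 := by omega
      have e : X * 2^(j-1) = (2^(j-1)) * (X % 2) + (X / 2) * 2^j := by
        rw [hq]
        calc X * 2^(j-1) = (2 * (X / 2) + X % 2) * 2^(j-1) := by rw [← h3]
          _ = 2^(j-1) * (X % 2) + (X / 2) * (2 * 2^(j-1)) := by ring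
      rw [e, Nat.add_mul_mod_self_right]
      apply Nat.mod_eq_of_lt
      have h2 : X % 2 < 2 := Nat.mod_lt _ (by norm_num)
      have h4 : 2^(j-1) * (X % 2) ≤ 2^(j-1) * 1 := Nat.mul_le_mul_left _ (by omega)
      omega
    rw [hval (a j), hval (b j), parity j hj]
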